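/- Let N ⊆ ℝ^m be a nonempty closed set and p ∈ ℝ^m \ N a point with exactly two nearest points q₁, q₂ ∈ π_N(p). Set N_j := N ∩ { y : |q_j - y| ≤ (1/4)|q₁ - q₂| } for j = 1, 2. Then N₁ and N₂ are disjoint nonempty compact sets, and there exists r > 0 such that for every x in the open ball B_r(p) one has π_N(x) ⊆ N₁ ∪ N₂ and d_N(x) = min(d_{N₁}(x), d_{N₂}(x)). -/

import Mathlib

open Set Metric

/-- The set of nearest points of `N` to `x`. -/
def nearestPts {E : Type*} [MetricSpace E] (N : Set E) (x : E) : Set E :=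
  {q ∈ N | dist q x = infDist x N}

/-- Cleaving lemma setup: if `p ∉ N` has exactly two nearest points `q₁ ≠ q₂` and
`N_j := N ∩ {y : dist(q_j, y) ≤ (1/4)·dist(q₁,q₂)}`, then `N₁, N₂` are disjoint nonempty
compact sets and there is `r > 0` such that for every `x ∈ B_r(p)`, `π_N(x) ⊆ N₁ ∪ N₂`
and `d_N(x) = min (d_{N₁}(x)) (d_{N₂}(x))`. -/
theorem stmt_5 {m : ℕ} (N : Set (EuclideanSpace ℝ (Fin m)))
    (hN : IsClosed N) (hNne : N.Nonempty)
    (p q₁ q₂ : EuclideanSpace ℝ (Fin m)) (hp : p ∉ N) (hq12 : q₁ ≠ q₂)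
    (hproj : nearestPts N p = {q₁, q₂})
    (N₁ N₂ : Set (EuclideanSpace ℝ (Fin m)))
    (hN₁ : N₁ = N ∩ {y | dist q₁ y ≤ (1/4) * dist q₁ q₂})
    (hN₂ : N₂ = N ∩ {y | dist q₂ y ≤ (1/4) * dist q₁ q₂}) :
    Disjoint N₁ N₂ ∧ N₁.Nonempty ∧ N₂.Nonempty ∧ IsCompact N₁ ∧ IsCompact N₂ ∧
    ∃ r > (0 : ℝ), ∀ x ∈ ball p r,
      nearestPts N x ⊆ N₁ ∪ N₂ ∧
      infDist x N = min (infDist x N₁) (infDist x N₂) := by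
  subst hN₁ hN₂
  have hq₁ : q₁ ∈ nearestPts N p := by rw [hproj]; left; rfl
  have hq₂ : q₂ ∈ nearestPts N p := by rw [hproj]; right; rfl
  obtain ⟨hq₁N, hq₁d⟩ := hq₁
  obtain ⟨hq₂N, hq₂d⟩ := hq₂
  set d := dist q₁ q₂ with hd
  have hdpos : 0 < d := dist_pos.mpr hq12
  have hεpos : 0 < d / 4 := by linarith
  set D := infDist p N with hD
  have hDle₁ : D ≤ dist q₁ p := le_of_eq hq₁d.symm
  -- disjointness
  have hdisj : Disjoint (N ∩ {y | dist q₁ y ≤ (1/4) * d}) (N ∩ {y | dist q₂ y ≤ (1/4) * d}) := by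
    rw [Set.disjoint_left]
    rintro y ⟨-, hy1⟩ ⟨-, hy2⟩
    simp only [mem_setOf_eq] at hy1 hy2
    have ht := dist_triangle q₁ y q₂
    rw [dist_comm y q₂] at ht
    have : d ≤ (1/4) * d + (1/4) * d := le_trans ht (add_le_add hy1 hy2)
    linarith
  -- nonempty
  have hq₁mem : q₁ ∈ N ∩ {y | dist q₁ y ≤ (1/4) * d} := by
    refine ⟨hq₁N, ?_⟩; simp only [mem_setOf_eq, dist_self]; positivity
  have hq₂mem : q₂ ∈ N ∩ {y | dist q₂ y ≤ (1/4) * d} := by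
    refine ⟨hq₂N, ?_⟩; simp only [mem_setOf_eq, dist_self]; positivity
  -- compactness
  have hcl : ∀ q : EuclideanSpace ℝ (Fin m),
      IsClosed (N ∩ {y | dist q y ≤ (1/4) * d}) :=
    fun q => hN.inter (isClosed_le (continuous_const.dist continuous_id) continuous_const)
  have hcomp : ∀ q : EuclideanSpace ℝ (Fin m),
      IsCompact (N ∩ {y | dist q y ≤ (1/4) * d}) := by
    intro q
    refine (isCompact_closedBall q ((1/4) * d)).of_isClosed_subset (hcl q) ?_
    rintro y ⟨-, hy⟩
    simpa [mem_closedBall, dist_comm] using hy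
  -- key claim
  have key : ∃ r > (0:ℝ), r ≤ 1/2 ∧ ∀ q ∈ N, dist q p < D + 2 * r →
      (dist q₁ q < d / 4 ∨ dist q₂ q < d / 4) := by
    set K := (N ∩ closedBall p (D + 1)) \ (ball q₁ (d/4) ∪ ball q₂ (d/4)) with hK
    have hKcl : IsClosed K := (hN.inter isClosed_closedBall).sdiff (isOpen_ball.union isOpen_ball)
    have hKcomp : IsCompact K := by
      refine (isCompact_closedBall p (D+1)).of_isClosed_subset hKcl ?_
      rintro q ⟨⟨-, hq⟩, -⟩; exact hq
    by_cases hKne : K.Nonempty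
    · obtain ⟨q0, hq0K, hmin⟩ := hKcomp.exists_isMinOn hKne
        ((continuous_id.dist continuous_const).continuousOn :
          ContinuousOn (fun q => dist q p) K)
      have hq0N : q0 ∈ N := hq0K.1.1
      have hq0ge : D ≤ dist q0 p := by
        rw [dist_comm]; exact infDist_le_dist_of_mem hq0N
      have hq0gt : D < dist q0 p := by
        rcases lt_or_eq_of_le hq0ge with h | h
        · exact h
        · exfalso
          have : q0 ∈ nearestPts N p := ⟨hq0N, h.symm⟩
          rw [hproj] at this
          rcases this with rfl | rfl
          · exact hq0K.2 (Or.inl (mem_ball_self hεpos))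
          · exact hq0K.2 (Or.inr (mem_ball_self hεpos))
      refine ⟨min (1/2) ((dist q0 p - D)/2), lt_min (by norm_num) (by linarith),
        min_le_left _ _, ?_⟩
      intro q hqN hqd
      by_contra h
      push_neg at h
      have hr2 : min (1/2 : ℝ) ((dist q0 p - D)/2) ≤ (dist q0 p - D)/2 := min_le_right _ _
      have hr1 : min (1/2 : ℝ) ((dist q0 p - D)/2) ≤ 1/2 := min_le_left _ _
      have hqK : q ∈ K := by
        refine ⟨⟨hqN, ?_⟩, ?_⟩
        · rw [mem_closedBall]; linarith
        · rintro (hb | hb)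
          · rw [mem_ball, dist_comm] at hb; exact absurd hb (not_lt.mpr (not_lt.mp (by exact fun c => absurd c (not_lt.mpr h.1))))
          · rw [mem_ball, dist_comm] at hb; exact absurd hb (not_lt.mpr h.2).elim
      have := hmin hqK
      simp only [Set.mem_setOf_eq] at this
      have : dist q0 p ≤ dist q p := this
      linarith
    · refine ⟨1/2, by norm_num, le_refl _, ?_⟩
      intro q hqN hqd
      have hqnK : q ∉ K := fun hq => hKne ⟨q, hq⟩
      have hqmem : q ∈ N ∩ closedBall p (D + 1) := ⟨hqN, by rw [mem_closedBall]; linarith⟩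
      rcases not_not.mp (fun hc => hqnK ⟨hqmem, hc⟩) with hb | hb
      · left; rw [mem_ball, dist_comm] at hb; exact hb
      · right; rw [mem_ball, dist_comm] at hb; exact hb
  obtain ⟨r, hrpos, hrle, hkey⟩ := key
  refine ⟨hdisj, ⟨q₁, hq₁mem⟩, ⟨q₂, hq₂mem⟩, hcomp q₁, hcomp q₂, r, hrpos, ?_⟩
  intro x hx
  rw [mem_ball] at hx
  have hdx : infDist x N ≤ D + r := by
    have := infDist_le_infDist_add_dist (x := x) (y := p) (s := N)
    linarith [this, hx.le]
  have hsub : nearestPts N x ⊆ (N ∩ {y | dist q₁ y ≤ (1/4) * d}) ∪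
      (N ∩ {y | dist q₂ y ≤ (1/4) * d}) := by
    rintro q ⟨hqN, hqdist⟩
    have hqp : dist q p < D + 2 * r := by
      have h1 := dist_triangle q x p
      rw [hqdist] at h1
      linarith
    rcases hkey q hqN hqp with h | h
    · left; exact ⟨hqN, by simp only [mem_setOf_eq]; linarith⟩
    · right; exact ⟨hqN, by simp only [mem_setOf_eq]; linarith⟩
  refine ⟨hsub, ?_⟩
  apply le_antisymm
  · refine le_min ?_ ?_
    · exact infDist_le_infDist_of_subset inter_subset_left ⟨q₁, hq₁mem⟩
    · exact infDist_le_infDist_of_subset inter_subset_left ⟨q₂, hq₂mem⟩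
  · obtain ⟨q, hqN, hq⟩ := hN.exists_infDist_eq_dist hNne x
    have hq' : q ∈ nearestPts N x := ⟨hqN, by rw [dist_comm]; exact hq.symm⟩
    rcases hsub hq' with h | h
    · calc min (infDist x (N ∩ {y | dist q₁ y ≤ (1/4) * d}))
            (infDist x (N ∩ {y | dist q₂ y ≤ (1/4) * d}))
          ≤ infDist x (N ∩ {y | dist q₁ y ≤ (1/4) * d}) := min_le_left _ _
        _ ≤ dist x q := infDist_le_dist_of_mem h
        _ = infDist x N := hq.symm
    · calc min (infDist x (N ∩ {y | dist q₁ y ≤ (1/4) * d}))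
            (infDist x (N ∩ {y | dist q₂ y ≤ (1/4) * d}))
          ≤ infDist x (N ∩ {y | dist q₂ y ≤ (1/4) * d}) := min_le_right _ _
        _ ≤ dist x q := infDist_le_dist_of_mem h
        _ = infDist x N := hq.symm
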